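/- For a prime p, real α > 0, and integer r < 0, define K_α(y) = [(1-p^α)/(1-p^{-α-1})·|y|_p^{-α-1} + p^{r(α+1)}·(1-p^α)/(1-p^{α+1})] for y in the ball |y|_p ≤ p^{-r} (and 0 outside). Then 0 < -∫_{1<|y|_p≤p^{-r}} K_α(y) dy < 1. -/

import Mathlib

open MeasureTheory Filter Topology

noncomputable section

variable (p : ℕ) [Fact p.Prime]

instance : MeasurableSpace ℚ_[p] := borel _
instance : BorelSpace ℚ_[p] := ⟨rfl⟩

/-- The closed unit ball of `ℚ_[p]` (i.e. `ℤ_p`) as a positive compact set. -/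
def padicUnitBall : TopologicalSpace.PositiveCompacts ℚ_[p] where
  carrier := Metric.closedBall 0 1
  isCompact' := isCompact_closedBall 0 1
  interior_nonempty' := ⟨0, mem_interior_iff_mem_nhds.2 (Metric.closedBall_mem_nhds 0 one_pos)⟩

/-- Haar measure on `ℚ_[p]` normalized so that `ℤ_p` has measure 1. -/
def μp : Measure ℚ_[p] := Measure.addHaarMeasure (padicUnitBall p)


lemma final_ineq (q u : ℝ) (hq : 1 < q) (hu : 1 < u) (n : ℕ) (hn : 0 < n) :
    0 < -(∑ j ∈ Finset.range n, (q^(j+1) - q^j) *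
        ((1-u)/(1-(u*q)⁻¹) * ((u*q)⁻¹)^(j+1) + ((u*q)⁻¹)^n * (1-u)/(1-u*q))) ∧
    -(∑ j ∈ Finset.range n, (q^(j+1) - q^j) *
        ((1-u)/(1-(u*q)⁻¹) * ((u*q)⁻¹)^(j+1) + ((u*q)⁻¹)^n * (1-u)/(1-u*q))) < 1 := by
  have hq0 : (0:ℝ) < q := lt_trans one_pos hq
  have hu0 : (0:ℝ) < u := lt_trans one_pos hu
  have huq : 1 < u*q := one_lt_mul_of_lt_of_le hu hq.le
  have huq0 : (0:ℝ) < u*q := lt_trans one_pos huq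
  have hwinv : u * q * (u*q)⁻¹ = 1 := mul_inv_cancel₀ (ne_of_gt huq0)
  generalize hwd : (u*q : ℝ)⁻¹ = w
  rw [hwd] at hwinv
  clear hwd
  have huq1 : u*q - 1 ≠ 0 := by nlinarith
  have h1uq : 1 - u*q ≠ 0 := by nlinarith
  have hw0 : 0 < w := by nlinarith
  have hw1 : w < 1 := by nlinarith
  have h1w : (1:ℝ) - w ≠ 0 := by nlinarith
  have hkey : ∀ j : ℕ, ((1-u)/(1-w) * w^(j+1) + w^n * (1-u)/(1-u*q))
      = (u-1) * (w^n - w^j)/(u*q-1) := by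
    intro j
    have h1w' : 1 - w = (u*q-1)*w := by linear_combination -hwinv
    rw [pow_succ, h1w']
    field_simp
    ring
  -- rewrite each summand
  have hterm : ∀ j : ℕ, (q^(j+1) - q^j) *
        ((1-u)/(1-w) * w^(j+1) + w^n * (1-u)/(1-u*q))
      = -((q^(j+1) - q^j) * ((u-1) * (w^j - w^n)/(u*q-1))) := by
    intro j
    rw [hkey j]; ring
  have hpos : ∀ j ∈ Finset.range n, 0 < (q^(j+1) - q^j) * ((u-1) * (w^j - w^n)/(u*q-1)) := by
    intro j hj
    have hjn : j < n := Finset.mem_range.1 hj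
    have hwn : w^n < w^j := pow_lt_pow_right_of_lt_one₀ hw0 hw1 hjn
    have h1 : 0 < q^(j+1) - q^j := by
      have : q^j < q^(j+1) := by
        rw [pow_succ]
        nlinarith [pow_pos hq0 j]
      linarith
    have h2 : 0 < (u-1) * (w^j - w^n)/(u*q-1) := by
      apply div_pos (by nlinarith) (by nlinarith)
    exact mul_pos h1 h2
  have hrw : -(∑ j ∈ Finset.range n, (q^(j+1) - q^j) *
        ((1-u)/(1-w) * w^(j+1) + w^n * (1-u)/(1-u*q)))
      = ∑ j ∈ Finset.range n, (q^(j+1) - q^j) * ((u-1) * (w^j - w^n)/(u*q-1)) := by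
    rw [← Finset.sum_neg_distrib]
    exact Finset.sum_congr rfl fun j _ => by rw [hterm j, neg_neg]
  rw [hrw]
  constructor
  · exact Finset.sum_pos hpos ⟨0, Finset.mem_range.2 hn⟩
  · -- upper bound
    have hsplit : ∀ j : ℕ, (q^(j+1) - q^j) * ((u-1) * (w^j - w^n)/(u*q-1))
        = (u-1)*(q-1)/(u*q-1) * (q*w)^j - (u-1)/(u*q-1)*w^n * (q^(j+1)-q^j) := by
      intro j
      rw [mul_pow, pow_succ]
      field_simp
    rw [Finset.sum_congr rfl fun j _ => hsplit j, Finset.sum_sub_distrib,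
      ← Finset.mul_sum, ← Finset.mul_sum, Finset.sum_range_sub (fun i => q^i)]
    have hqwu : q*w = u⁻¹ := by
      have h' : u * (q*w) = 1 := by linear_combination hwinv
      field_simp at h' ⊢
      linarith [h']
    have hqw1 : q*w < 1 := by rw [hqwu]; exact inv_lt_one_of_one_lt₀ hu
    have hqw0 : 0 < q*w := mul_pos hq0 hw0
    have hS1 : ∑ j ∈ Finset.range n, (q*w)^j ≤ 1/(1-q*w) := by
      rw [le_div_iff₀ (by linarith)]
      have := geom_sum_mul (q*w) n
      nlinarith [pow_nonneg hqw0.le n, this]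
    have hc1 : 0 < (u-1)*(q-1)/(u*q-1) := div_pos (by nlinarith) (by nlinarith)
    have hc2 : 0 < (u-1)/(u*q-1)*w^n * (q^n - q^0) := by
      apply mul_pos (mul_pos (div_pos (by nlinarith) (by nlinarith)) (pow_pos hw0 n))
      have : (1:ℝ) < q^n := one_lt_pow₀ hq (by omega)
      rw [pow_zero]; linarith
    calc (u-1)*(q-1)/(u*q-1) * ∑ j ∈ Finset.range n, (q*w)^j
          - (u-1)/(u*q-1)*w^n * (q^n - q^0)
        < (u-1)*(q-1)/(u*q-1) * (1/(1-q*w)) := by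
          have h := mul_le_mul_of_nonneg_left hS1 hc1.le
          linarith
      _ ≤ 1 := by
          have hu1 : u - 1 ≠ 0 := by nlinarith
          have h1u : 1 - u⁻¹ = (u-1)/u := by field_simp
          rw [hqwu, h1u, one_div_div, div_mul_div_comm, div_le_one (by nlinarith)]
          nlinarith [sq_nonneg (u-1)]


instance : (μp p).IsAddHaarMeasure := by unfold μp; infer_instance
instance : (μp p).IsAddRightInvariant := by infer_instance

def Ball (k : ℕ) : Set ℚ_[p] := {y : ℚ_[p] | ‖y‖ ≤ (p:ℝ)^k}

lemma hp1 : (1:ℝ) < p := by exact_mod_cast (Fact.out : p.Prime).one_lt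
lemma hp0 : (0:ℝ) < p := lt_trans one_pos (hp1 p)

lemma ball_measurable (k : ℕ) : MeasurableSet (Ball p k) :=
  (isClosed_le continuous_norm continuous_const).measurableSet

lemma translate_eq (c : ℚ_[p]) :
    {y : ℚ_[p] | ‖y - c‖ ≤ 1} = (fun y => y + (-c)) ⁻¹' (Metric.closedBall 0 1) := by
  ext y; simp [Metric.mem_closedBall, dist_eq_norm, sub_eq_add_neg]

lemma translate_meas (c : ℚ_[p]) : μp p {y : ℚ_[p] | ‖y - c‖ ≤ 1} = 1 := by
  rw [translate_eq, measure_preimage_add_right]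
  exact Measure.addHaarMeasure_self

lemma ball_cover (k : ℕ) :
    Ball p k = ⋃ m ∈ Finset.range (p^k), {y : ℚ_[p] | ‖y - (m:ℚ_[p])/(p:ℚ_[p])^k‖ ≤ 1} := by
  have hpk : ((p:ℚ_[p])^k) ≠ 0 := by
    exact_mod_cast pow_ne_zero k (Nat.cast_ne_zero.2 (Fact.out : p.Prime).ne_zero)
  have hnormpk : ‖(p:ℚ_[p])^k‖ = (p:ℝ)^(-(k:ℤ)) := by
    rw [norm_pow, Padic.norm_p, inv_pow, ← zpow_natCast ((p:ℝ)) k, ← zpow_neg]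
  ext y
  simp only [Set.mem_iUnion, Finset.mem_range, Set.mem_setOf_eq, Ball]
  constructor
  · intro hy
    have hmem : ‖(p:ℚ_[p])^k * y‖ ≤ 1 := by
      rw [norm_mul, hnormpk]
      calc (p:ℝ)^(-(k:ℤ)) * ‖y‖ ≤ (p:ℝ)^(-(k:ℤ)) * (p:ℝ)^k := by
            exact mul_le_mul_of_nonneg_left hy (zpow_nonneg (hp0 p).le _)
        _ = 1 := by
            rw [← zpow_natCast ((p:ℝ)) k, ← zpow_add₀ (hp0 p).ne']
            simp
    set z : ℤ_[p] := ⟨(p:ℚ_[p])^k * y, hmem⟩ with hz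
    refine ⟨z.appr k, PadicInt.appr_lt z k, ?_⟩
    have hspec : ‖z - (z.appr k : ℤ_[p])‖ ≤ (p:ℝ)^(-(k:ℤ)) := by
      rw [PadicInt.norm_le_pow_iff_mem_span_pow]
      exact PadicInt.appr_spec k z
    have hspec' : ‖(p:ℚ_[p])^k * y - (z.appr k : ℚ_[p])‖ ≤ (p:ℝ)^(-(k:ℤ)) := by
      have : ((z - (z.appr k : ℤ_[p]) : ℤ_[p]) : ℚ_[p]) = (p:ℚ_[p])^k * y - (z.appr k : ℚ_[p]) := by
        push_cast [hz]
        exact PadicInt.coe_sub _ _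
      rwa [PadicInt.norm_def, this] at hspec
    have : y - (z.appr k : ℚ_[p])/(p:ℚ_[p])^k = ((p:ℚ_[p])^k * y - (z.appr k : ℚ_[p]))/(p:ℚ_[p])^k := by
      rw [sub_div, mul_div_cancel_left₀ y hpk]
    rw [this, norm_div, hnormpk, div_le_one (zpow_pos (hp0 p) _)]
    exact hspec'
  · rintro ⟨m, hm, hy⟩
    have hc : ‖(m:ℚ_[p])/(p:ℚ_[p])^k‖ ≤ (p:ℝ)^k := by
      rw [norm_div, hnormpk]
      have h1 : ‖((m:ℤ):ℚ_[p])‖ ≤ 1 := Padic.norm_int_le_one m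
      rw [div_le_iff₀ (zpow_pos (hp0 p) _)]
      push_cast at h1 ⊢
      calc ‖(m:ℚ_[p])‖ ≤ 1 := h1
        _ ≤ (p:ℝ)^k * (p:ℝ)^(-(k:ℤ)) := by
            rw [← zpow_natCast ((p:ℝ)) k, ← zpow_add₀ (hp0 p).ne']
            simp
    calc ‖y‖ = ‖(y - (m:ℚ_[p])/(p:ℚ_[p])^k) + (m:ℚ_[p])/(p:ℚ_[p])^k‖ := by ring_nf
      _ ≤ max ‖y - (m:ℚ_[p])/(p:ℚ_[p])^k‖ ‖(m:ℚ_[p])/(p:ℚ_[p])^k‖ := Padic.nonarchimedean _ _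
      _ ≤ (p:ℝ)^k := max_le (le_trans hy (one_le_pow₀ (hp1 p).le)) hc

lemma ball_meas (k : ℕ) : μp p (Ball p k) = p^k := by
  rw [ball_cover]
  rw [measure_biUnion_finset ?disj ?meas]
  · simp [translate_meas, Finset.card_range]
  case meas =>
    intro m _
    rw [translate_eq]
    exact (measurable_add_const _) (measurableSet_closedBall)
  case disj =>
    intro m hm m' hm' hne
    simp only [Finset.coe_range, Set.mem_Iio] at hm hm'
    rw [Function.onFun, Set.disjoint_left]
    intro y hy hy'
    apply hne
    simp only [Set.mem_setOf_eq] at hy hy'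
    have hpk : ((p:ℚ_[p])^k) ≠ 0 := by
      exact_mod_cast pow_ne_zero k (Nat.cast_ne_zero.2 (Fact.out : p.Prime).ne_zero)
    have hnormpk : ‖(p:ℚ_[p])^k‖ = (p:ℝ)^(-(k:ℤ)) := by
      rw [norm_pow, Padic.norm_p]; simp [zpow_neg]
    have hdiff : ‖((m:ℚ_[p]) - m')/(p:ℚ_[p])^k‖ ≤ 1 := by
      have : ((m:ℚ_[p]) - m')/(p:ℚ_[p])^k
          = ((m:ℚ_[p])/(p:ℚ_[p])^k - y) + (y - (m':ℚ_[p])/(p:ℚ_[p])^k) := by ring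
      rw [this]
      refine le_trans (Padic.nonarchimedean _ _) (max_le ?_ hy')
      rwa [norm_sub_rev]
    have hint : ‖(((m:ℤ) - m' : ℤ) : ℚ_[p])‖ ≤ (p:ℝ)^(-(k:ℤ)) := by
      rw [norm_div, hnormpk, div_le_one (zpow_pos (hp0 p) _)] at hdiff
      push_cast
      exact hdiff
    have hdvd : ((p:ℤ)^k) ∣ ((m:ℤ) - m') := (Padic.norm_int_le_pow_iff_dvd _ _).1 hint
    have h1 : (m:ℤ) < (p:ℤ)^k := by exact_mod_cast hm
    have h2 : (m':ℤ) < (p:ℤ)^k := by exact_mod_cast hm'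
    have : ((m:ℤ) - m') = 0 := by
      refine Int.eq_zero_of_abs_lt_dvd hdvd ?_
      rw [abs_sub_lt_iff]
      omega
    omega

def Sph (k : ℕ) : Set ℚ_[p] := {y : ℚ_[p] | ‖y‖ = (p:ℝ)^k}

lemma sph_measurable (k : ℕ) : MeasurableSet (Sph p k) :=
  (isClosed_eq continuous_norm continuous_const).measurableSet

lemma norm_val (y : ℚ_[p]) (hy : y ≠ 0) : ∃ v : ℤ, ‖y‖ = (p:ℝ)^v :=
  ⟨-y.valuation, Padic.norm_eq_zpow_neg_valuation hy⟩

lemma annulus_eq (n : ℕ) :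
    {y : ℚ_[p] | 1 < ‖y‖ ∧ ‖y‖ ≤ (p:ℝ)^(n:ℕ)} = ⋃ j ∈ Finset.range n, Sph p (j+1) := by
  ext y
  simp only [Set.mem_iUnion, Finset.mem_range, Set.mem_setOf_eq, Sph]
  constructor
  · rintro ⟨h1, h2⟩
    have hy0 : y ≠ 0 := by
      intro h; rw [h, norm_zero] at h1; linarith
    obtain ⟨v, hv⟩ := norm_val p y hy0
    rw [hv] at h1 h2
    have hv0 : 0 < v := by
      by_contra h
      push_neg at h
      have : (p:ℝ)^v ≤ 1 := zpow_le_one_of_nonpos₀ (hp1 p).le h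
      linarith
    have hvn : v ≤ (n:ℤ) := (zpow_le_zpow_iff_right₀ (hp1 p)).1 (by rwa [zpow_natCast])
    refine ⟨v.toNat - 1, by omega, ?_⟩
    rw [hv]
    rw [show (v.toNat - 1 + 1 : ℕ) = v.toNat by omega, ← zpow_natCast]
    congr 1
    omega
  · rintro ⟨j, hj, hy⟩
    rw [hy]
    constructor
    · exact one_lt_pow₀ (hp1 p) (by omega)
    · exact pow_le_pow_right₀ (hp1 p).le (by omega)

lemma sph_eq_diff (k : ℕ) : Sph p (k+1) = Ball p (k+1) \ Ball p k := by
  ext y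
  simp only [Sph, Ball, Set.mem_diff, Set.mem_setOf_eq]
  constructor
  · intro hy
    rw [hy]
    refine ⟨le_refl _, ?_⟩
    push_neg
    exact pow_lt_pow_right₀ (hp1 p) (by omega)
  · rintro ⟨h2, h1⟩
    push_neg at h1
    have hy0 : y ≠ 0 := by
      intro h
      rw [h, norm_zero] at h1
      exact absurd h1 (not_lt.2 (pow_nonneg (hp0 p).le _))
    obtain ⟨v, hv⟩ := norm_val p y hy0
    rw [hv] at h1 h2 ⊢
    have hk1 : (k:ℤ) < v := (zpow_lt_zpow_iff_right₀ (hp1 p)).1 (by rwa [zpow_natCast])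
    have hk2 : v ≤ ((k+1:ℕ):ℤ) := (zpow_le_zpow_iff_right₀ (hp1 p)).1 (by rwa [zpow_natCast])
    push_cast at hk2
    have hvk : v = ((k+1:ℕ):ℤ) := by push_cast; omega
    rw [hvk, zpow_natCast]

lemma ball_subset (k : ℕ) : Ball p k ⊆ Ball p (k+1) := by
  intro y hy
  exact le_trans hy (pow_le_pow_right₀ (hp1 p).le (by omega))

lemma sph_meas (k : ℕ) :
    μp p (Sph p (k+1)) = (p:ENNReal)^(k+1) - (p:ENNReal)^k := by
  rw [sph_eq_diff, measure_diff (ball_subset p k) (ball_measurable p k).nullMeasurableSet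
    (by rw [ball_meas]; exact ENNReal.pow_ne_top (ENNReal.natCast_ne_top p)),
    ball_meas, ball_meas]

lemma sph_meas_ne_top (k : ℕ) : μp p (Sph p (k+1)) < ⊤ := by
  rw [sph_meas]
  exact lt_of_le_of_lt tsub_le_self (ENNReal.pow_lt_top (ENNReal.natCast_lt_top p))

lemma sph_meas_toReal (k : ℕ) :
    (μp p (Sph p (k+1))).toReal = (p:ℝ)^(k+1) - (p:ℝ)^k := by
  rw [sph_meas, ENNReal.toReal_sub_of_le
    (pow_le_pow_right' (by exact_mod_cast Nat.one_le_cast.2 (Fact.out : p.Prime).one_lt.le) (by omega))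
    (ENNReal.pow_ne_top (ENNReal.natCast_ne_top p))]
  simp [ENNReal.toReal_pow]


/-- The heat kernel `Z_r(x,t) = ∫ χ(-xξ) e^{-t(⟨ξ⟩^α - p^{rα})} dξ`, where
`⟨ξ⟩ = max(|ξ|_p, p^r)`. -/
def heatKernel (χ : AddChar ℚ_[p] ℂ) (r : ℤ) (α t : ℝ) (x : ℚ_[p]) : ℂ :=
  ∫ ξ, χ (-(x*ξ)) *
    Complex.exp (-((t * ((max ‖ξ‖ ((p:ℝ)^r)) ^ α - (p:ℝ) ^ ((r:ℝ)*α)) : ℝ) : ℂ)) ∂(μp p)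

/-- The kernel `K_α(y)`, supported on the ball `|y|_p ≤ p^{-r}`. -/
def Kfun (r : ℤ) (α : ℝ) (y : ℚ_[p]) : ℝ :=
  if ‖y‖ ≤ (p:ℝ)^(-r) then
    (1 - (p:ℝ)^α)/(1 - (p:ℝ)^(-α-1)) * ‖y‖ ^ (-α-1)
      + (p:ℝ)^((r:ℝ)*(α+1)) * (1 - (p:ℝ)^α)/(1 - (p:ℝ)^(α+1))
  else 0

/-- `u(x,t) = ∫_{|ξ|_p ≤ 1} χ(-xξ) e^{-t(⟨ξ⟩^α - p^{rα})} dξ`, the solution with initial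
datum the indicator of the unit ball. -/
def uball (χ : AddChar ℚ_[p] ℂ) (r : ℤ) (α t : ℝ) (x : ℚ_[p]) : ℂ :=
  ∫ ξ in {ξ : ℚ_[p] | ‖ξ‖ ≤ 1}, χ (-(x*ξ)) *
    Complex.exp (-((t * ((max ‖ξ‖ ((p:ℝ)^r)) ^ α - (p:ℝ) ^ ((r:ℝ)*α)) : ℝ) : ℂ)) ∂(μp p)

/-- The survival probability `S(t) = ∫_{|x|_p ≤ 1} u(x,t) dx`. -/
def Sfun (χ : AddChar ℚ_[p] ℂ) (r : ℤ) (α t : ℝ) : ℂ :=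
  ∫ x in {x : ℚ_[p] | ‖x‖ ≤ 1}, uball p χ r α t x ∂(μp p)

/-- The solution `u(x,t) = (Z_r(·,t) ∗ φ)(x)` of the Cauchy problem, with `u(x,0) = φ(x)`. -/
def sol (χ : AddChar ℚ_[p] ℂ) (r : ℤ) (α : ℝ) (φ : ℚ_[p] → ℂ) (t : ℝ) (x : ℚ_[p]) : ℂ :=
  if t = 0 then φ x else ∫ y, heatKernel p χ r α t (x-y) * φ y ∂(μp p)

/-- The pseudodifferential operator `H^α` with symbol `⟨ξ⟩^α - p^{rα}`:
`H^α g = 𝓕⁻¹[(⟨ξ⟩^α - p^{rα}) 𝓕g]`. -/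
def Hop (χ : AddChar ℚ_[p] ℂ) (r : ℤ) (α : ℝ) (g : ℚ_[p] → ℂ) (x : ℚ_[p]) : ℂ :=
  ∫ ξ, χ (-(x*ξ)) * (((max ‖ξ‖ ((p:ℝ)^r)) ^ α - (p:ℝ)^((r:ℝ)*α) : ℝ) : ℂ) *
    (∫ y, χ (ξ*y) * g y ∂(μp p)) ∂(μp p)

/-- The Laplace transform `G_r(s)` of the density `g(t)`. -/
def Gr (χ : AddChar ℚ_[p] ℂ) (r : ℤ) (α : ℝ) (s : ℝ) : ℂ :=
  ∫ y in {y : ℚ_[p] | 1 < ‖y‖ ∧ ‖y‖ ≤ (p:ℝ)^(-r)}, (Kfun p r α y : ℂ) *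
    ∫ ξ in {ξ : ℚ_[p] | ‖ξ‖ ≤ 1},
      χ (-(ξ*y)) / ((s:ℂ) + (((max ‖ξ‖ ((p:ℝ)^r)) ^ α - (p:ℝ)^((r:ℝ)*α) : ℝ) : ℂ)) ∂(μp p) ∂(μp p)

theorem stmt1 (α : ℝ) (hα : 0 < α) (r : ℤ) (hr : r < 0) :
    0 < -∫ y in {y : ℚ_[p] | 1 < ‖y‖ ∧ ‖y‖ ≤ (p:ℝ)^(-r)}, Kfun p r α y ∂(μp p) ∧
    -∫ y in {y : ℚ_[p] | 1 < ‖y‖ ∧ ‖y‖ ≤ (p:ℝ)^(-r)}, Kfun p r α y ∂(μp p) < 1 := by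
  classical
  have hq1 : (1:ℝ) < p := hp1 p
  have hq0 : (0:ℝ) < p := hp0 p
  obtain ⟨n, hn0, hnr⟩ : ∃ n : ℕ, 0 < n ∧ (n:ℤ) = -r := ⟨(-r).toNat, by omega, by omega⟩
  have hpow : ((p:ℝ))^(-r) = (p:ℝ)^(n:ℕ) := by rw [← hnr, zpow_natCast]
  set q : ℝ := (p:ℝ) with hqdef
  set u : ℝ := q ^ (α : ℝ) with hudef
  have hu : 1 < u := (Real.one_lt_rpow_iff_of_pos hq0).2 (Or.inl ⟨hq1, hα⟩)
  have hA : q ^ (-α-1 : ℝ) = (u*q)⁻¹ := by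
    rw [hudef, show (-α-1 : ℝ) = -(α+1) by ring, Real.rpow_neg hq0.le, Real.rpow_add hq0,
      Real.rpow_one]
  have hD : q ^ (α+1 : ℝ) = u*q := by rw [hudef, Real.rpow_add hq0, Real.rpow_one]
  have hB : ∀ m : ℕ, ((q^m : ℝ)) ^ (-α-1 : ℝ) = ((u*q)⁻¹)^m := by
    intro m
    rw [← Real.rpow_natCast q m, ← Real.rpow_mul hq0.le, mul_comm, Real.rpow_mul hq0.le,
      hA, Real.rpow_natCast]
  have hrn : (r:ℝ) = -(n:ℝ) := by
    have h' : r = -(n:ℤ) := by omega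
    rw [h']; push_cast; ring
  have hC : q ^ ((r:ℝ)*(α+1)) = ((u*q)⁻¹)^n := by
    rw [hrn, show (-(n:ℝ))*(α+1) = (-α-1)*(n:ℝ) by ring, Real.rpow_mul hq0.le, hA,
      Real.rpow_natCast]
  have hKval : ∀ j, j < n → ∀ y ∈ Sph p (j+1), Kfun p r α y
      = (1-u)/(1-(u*q)⁻¹) * ((u*q)⁻¹)^(j+1) + ((u*q)⁻¹)^n * (1-u)/(1-u*q) := by
    intro j hj y hy
    have hy' : ‖y‖ = q^(j+1) := hy
    have hcond : ‖y‖ ≤ (p:ℝ)^(-r) := by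
      rw [hy', hpow]; exact pow_le_pow_right₀ hq1.le (by omega)
    simp only [Kfun, if_pos hcond]
    rw [hy', hB, hA, hC, hD, ← hudef]
  have hset : {y : ℚ_[p] | 1 < ‖y‖ ∧ ‖y‖ ≤ (p:ℝ)^(-r)} = ⋃ j ∈ Finset.range n, Sph p (j+1) := by
    rw [show ((p:ℝ))^(-r) = (p:ℝ)^(n:ℕ) by rw [← hnr, zpow_natCast]]
    exact annulus_eq p n
  have hdisj : (↑(Finset.range n) : Set ℕ).Pairwise (Function.onFun Disjoint fun j => Sph p (j+1)) := by
    intro a _ b _ hab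
    simp only [Function.onFun, Set.disjoint_left]
    intro y hya hyb
    apply hab
    have hqq : q^(a+1) = q^(b+1) := by
      have h1 : ‖y‖ = q^(a+1) := hya
      have h2 : ‖y‖ = q^(b+1) := hyb
      rw [← h1, h2]
    rcases lt_trichotomy a b with h|h|h
    · exact absurd hqq (ne_of_lt (pow_lt_pow_right₀ hq1 (by omega)))
    · exact h
    · exact absurd hqq.symm (ne_of_lt (pow_lt_pow_right₀ hq1 (by omega)))
  have hinteg : ∀ j ∈ Finset.range n, IntegrableOn (Kfun p r α) (Sph p (j+1)) (μp p) := by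
    intro j hj
    exact (integrableOn_const (sph_meas_ne_top p j).ne).congr_fun
      (fun y hy => (hKval j (Finset.mem_range.1 hj) y hy).symm) (sph_measurable p (j+1))
  have hint : ∫ y in {y : ℚ_[p] | 1 < ‖y‖ ∧ ‖y‖ ≤ (p:ℝ)^(-r)}, Kfun p r α y ∂(μp p)
      = ∑ j ∈ Finset.range n, (q^(j+1) - q^j) *
        ((1-u)/(1-(u*q)⁻¹) * ((u*q)⁻¹)^(j+1) + ((u*q)⁻¹)^n * (1-u)/(1-u*q)) := by
    rw [hset, integral_biUnion_finset _ (fun j _ => sph_measurable p (j+1)) hdisj hinteg]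
    refine Finset.sum_congr rfl fun j hj => ?_
    rw [setIntegral_congr_fun (sph_measurable p (j+1))
      (fun y hy => hKval j (Finset.mem_range.1 hj) y hy),
      setIntegral_const, measureReal_def, sph_meas_toReal, smul_eq_mul]
  rw [hint]
  exact final_ineq q u hq1 hu n hn0


end
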